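/- Let f : ℝⁿ → ℝᵠ be continuous with an isolated zero at p (only zero in B(p,R)). If the restriction of f to some sphere S(p,r), r ∈ (0,R), is null-homotopic as a map into ℝᵠ \ {0}, then for every ε > 0 there exists δ ∈ (0,R] such that for all r ∈ (0,δ), the restriction of f to S(p,r) is null-homotopic as a map into the punctured ball B*(0,ε) = {y ∈ ℝᵠ : 0 < ‖y‖ < ε}. -/

import Mathlib

open Metric Set

/-- `f` restricted to `A` is null-homotopic as a map into `X` ⊆ ℝ^q:
there is a continuous homotopy within `X` from `f|_A` to a constant map. -/
def IsNullHomotopicOn {n q : ℕ}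
    (f : EuclideanSpace ℝ (Fin n) → EuclideanSpace ℝ (Fin q))
    (A : Set (EuclideanSpace ℝ (Fin n)))
    (X : Set (EuclideanSpace ℝ (Fin q))) : Prop :=
  ∃ (F : EuclideanSpace ℝ (Fin n) × ℝ → EuclideanSpace ℝ (Fin q))
    (c : EuclideanSpace ℝ (Fin q)),
      c ∈ X ∧
      ContinuousOn F (A ×ˢ Icc (0:ℝ) 1) ∧
      (∀ x ∈ A, F (x, 0) = f x) ∧
      (∀ x ∈ A, F (x, 1) = c) ∧
      (∀ x ∈ A, ∀ t ∈ Icc (0:ℝ) 1, F (x, t) ∈ X)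

theorem stmt1 {n q : ℕ}
    (f : EuclideanSpace ℝ (Fin n) → EuclideanSpace ℝ (Fin q))
    (p : EuclideanSpace ℝ (Fin n)) (R : ℝ)
    (hf : Continuous f) (hp : f p = 0) (hR : 0 < R)
    (hiso : ∀ x ∈ ball p R, f x = 0 → x = p)
    (h : ∃ r ∈ Ioo (0:ℝ) R,
      IsNullHomotopicOn f (sphere p r) {y | y ≠ 0}) :
    ∀ ε > (0:ℝ), ∃ δ, 0 < δ ∧ δ ≤ R ∧
      ∀ r ∈ Ioo (0:ℝ) δ,
        IsNullHomotopicOn f (sphere p r) {y | 0 < ‖y‖ ∧ ‖y‖ < ε} := by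
  obtain ⟨r₀, hr₀, F, c, hc, hFc, hF0, hF1, hFX⟩ := h
  intro ε hε
  have hε2 : 0 < ε / 2 := by linarith
  obtain ⟨δ₀, hδ₀, hδ₀f⟩ := Metric.continuousAt_iff.mp hf.continuousAt (ε / 2) hε2
  refine ⟨min δ₀ R, lt_min hδ₀ hR, min_le_right _ _, ?_⟩
  rintro r ⟨hr0, hrδ⟩
  have hrR : r < R := lt_of_lt_of_le hrδ (min_le_right _ _)
  have hrδ₀ : r < δ₀ := lt_of_lt_of_le hrδ (min_le_left _ _)
  have hsmall : ∀ x ∈ sphere p r, ‖f x‖ ≤ ε / 2 := by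
    intro x hx
    rw [mem_sphere] at hx
    have h1 : dist x p < δ₀ := by rw [hx]; exact hrδ₀
    have h2 := hδ₀f h1
    rw [hp, dist_zero_right] at h2
    exact h2.le
  have hfxne : ∀ x ∈ sphere p r, f x ≠ 0 := by
    intro x hx h0
    rw [mem_sphere] at hx
    have hxb : x ∈ ball p R := by rw [mem_ball, hx]; exact hrR
    have := hiso x hxb h0
    rw [this, dist_self] at hx
    exact absurd hx.symm (ne_of_gt hr0)
  set σ : EuclideanSpace ℝ (Fin n) → EuclideanSpace ℝ (Fin n) :=
    fun x => p + (r₀ / r) • (x - p) with hσ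
  set g : EuclideanSpace ℝ (Fin q) → EuclideanSpace ℝ (Fin q) :=
    fun y => (min 1 ((ε / 2) / ‖y‖)) • y with hg
  set H : EuclideanSpace ℝ (Fin n) × ℝ → EuclideanSpace ℝ (Fin q) :=
    fun z => if z.2 ≤ 1 / 2 then f (p + ((1 - 2 * z.2) + 2 * z.2 * (r₀ / r)) • (z.1 - p))
      else F (σ z.1, 2 * z.2 - 1) with hH
  have hσs : ∀ x ∈ sphere p r, σ x ∈ sphere p r₀ := by
    intro x hx
    rw [mem_sphere] at hx ⊢
    rw [hσ]
    simp only
    rw [dist_self_add_left, norm_smul, Real.norm_eq_abs,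
      abs_of_pos (div_pos hr₀.1 hr0), ← dist_eq_norm, hx]
    field_simp
  have hgmem : ∀ y : EuclideanSpace ℝ (Fin q), y ≠ 0 → 0 < ‖g y‖ ∧ ‖g y‖ < ε := by
    intro y hy
    have hny : 0 < ‖y‖ := norm_pos_iff.mpr hy
    have hmin : 0 < min 1 ((ε / 2) / ‖y‖) := lt_min one_pos (div_pos hε2 hny)
    rw [hg]
    simp only
    rw [norm_smul, Real.norm_eq_abs, abs_of_pos hmin]
    constructor
    · exact mul_pos hmin hny
    · calc min 1 ((ε / 2) / ‖y‖) * ‖y‖ ≤ ((ε / 2) / ‖y‖) * ‖y‖ :=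
            mul_le_mul_of_nonneg_right (min_le_right _ _) hny.le
        _ = ε / 2 := by field_simp
        _ < ε := by linarith
  have hgid : ∀ y : EuclideanSpace ℝ (Fin q), y ≠ 0 → ‖y‖ ≤ ε / 2 → g y = y := by
    intro y hy hley
    have hny : 0 < ‖y‖ := norm_pos_iff.mpr hy
    rw [hg]
    simp only
    rw [min_eq_left (by rw [le_div_iff₀ hny]; linarith), one_smul]
  have hHne : ∀ z ∈ sphere p r ×ˢ Icc (0:ℝ) 1, H z ≠ 0 := by
    rintro ⟨x, t⟩ ⟨hx, ht⟩
    rw [hH]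
    simp only
    split_ifs with hth
    · set s : ℝ := (1 - 2 * t) + 2 * t * (r₀ / r) with hs
      have hsr : s * r = (1 - 2 * t) * r + 2 * t * r₀ := by
        rw [hs]; field_simp
      have h1 : 0 < s * r := by
        rw [hsr]; rcases lt_or_ge t (1/2) with h' | h'
        · nlinarith [mul_pos (show (0:ℝ) < 1 - 2 * t by linarith) hr0,
            mul_nonneg (show (0:ℝ) ≤ 2 * t by linarith [ht.1]) hr₀.1.le]
        · have heq : t = 1/2 := le_antisymm hth h'
          rw [heq]; norm_num; exact hr₀.1
      have h2 : s * r < R := by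
        rw [hsr]; rcases lt_or_ge t (1/2) with h' | h'
        · nlinarith [mul_pos (show (0:ℝ) < 1 - 2 * t by linarith) (show (0:ℝ) < R - r by linarith),
            mul_nonneg (show (0:ℝ) ≤ 2 * t by linarith [ht.1]) (show (0:ℝ) ≤ R - r₀ by linarith [hr₀.2])]
        · have heq : t = 1/2 := le_antisymm hth h'
          rw [heq]; norm_num; exact hr₀.2
      have hspos : 0 < s := by nlinarith
      have hdist : dist (p + s • (x - p)) p = s * r := by
        rw [dist_self_add_left, norm_smul, Real.norm_eq_abs, abs_of_pos hspos,
          ← dist_eq_norm, mem_sphere.mp hx]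
      intro hzero
      have hyb : p + s • (x - p) ∈ ball p R := by rw [mem_ball, hdist]; exact h2
      have heq := hiso _ hyb hzero
      rw [heq, dist_self] at hdist
      exact absurd hdist.symm (ne_of_gt h1)
    · have ht2 : 2 * t - 1 ∈ Icc (0:ℝ) 1 := by
        constructor
        · linarith [not_le.mp hth]
        · linarith [ht.2]
      exact hFX _ (hσs x hx) _ ht2
  have hHcont : ContinuousOn H (sphere p r ×ˢ Icc (0:ℝ) 1) := by
    rw [hH]
    apply ContinuousOn.if
    · rintro ⟨x, t⟩ ⟨⟨hx, ht⟩, hfr⟩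
      have hfr' : t = 1 / 2 := frontier_le_subset_eq continuous_snd continuous_const hfr
      simp only
      have h2t : 2 * t - 1 = (0:ℝ) := by rw [hfr']; norm_num
      have hcoef : 1 - 2 * t + 2 * t * (r₀ / r) = r₀ / r := by rw [hfr']; ring
      rw [h2t, hcoef, hF0 _ (hσs x hx)]
    · apply Continuous.continuousOn
      apply hf.comp
      exact continuous_const.add
        (((continuous_const.sub (continuous_const.mul continuous_snd)).add
          ((continuous_const.mul continuous_snd).mul continuous_const)).smul
          (continuous_fst.sub continuous_const))
    · have hσc : Continuous σ := by
        rw [hσ]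
        fun_prop
      apply hFc.comp
      · exact ((hσc.comp continuous_fst).prodMk
          ((continuous_const.mul continuous_snd).sub continuous_const)).continuousOn
      · rintro ⟨x, t⟩ ⟨⟨hx, ht⟩, hcl⟩
        have hsub : closure {z : EuclideanSpace ℝ (Fin n) × ℝ | ¬ z.2 ≤ 1 / 2} ⊆
            {z | 1 / 2 ≤ z.2} := by
          rw [show {z : EuclideanSpace ℝ (Fin n) × ℝ | ¬ z.2 ≤ 1 / 2}
              = {z | 1 / 2 < z.2} from by ext z; simp [not_le]]
          exact closure_lt_subset_le continuous_const continuous_snd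
        have ht' : 1 / 2 ≤ t := hsub hcl
        have ht2 : t ≤ 1 := ht.2
        show (σ x, 2 * t - 1) ∈ sphere p r₀ ×ˢ Icc (0:ℝ) 1
        exact ⟨hσs x hx, mem_Icc.mpr ⟨show (0:ℝ) ≤ 2 * t - 1 by linarith,
          show 2 * t - 1 ≤ (1:ℝ) by linarith⟩⟩
  have hgcont : ContinuousOn g {y : EuclideanSpace ℝ (Fin q) | y ≠ 0} := by
    rw [hg]
    exact (continuousOn_const.inf (continuousOn_const.div continuous_norm.continuousOn
      (fun y hy => norm_ne_zero_iff.mpr hy))).smul continuousOn_id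
  refine ⟨fun z => g (H z), g c, hgmem c hc, hgcont.comp hHcont (fun z hz => hHne z hz),
    ?_, ?_, ?_⟩
  · intro x hx
    have hH0 : H (x, 0) = f x := by
      rw [hH]
      simp only
      rw [if_pos (by norm_num : (0:ℝ) ≤ 1/2)]
      norm_num
    show g (H (x, 0)) = f x
    rw [hH0]
    exact hgid _ (hfxne x hx) (hsmall x hx)
  · intro x hx
    have hH1 : H (x, 1) = c := by
      rw [hH]
      simp only
      rw [if_neg (by norm_num : ¬((1:ℝ) ≤ 1/2))]
      norm_num
      exact hF1 _ (hσs x hx)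
    show g (H (x, 1)) = g c
    rw [hH1]
  · intro x hx t ht
    exact hgmem _ (hHne (x, t) ⟨hx, ht⟩)
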